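/- For a nontrivial additive character ψ of 𝔽_q and positive integers b_1,…,b_n, the function a ↦ Kl_a^n(ψ; b_1,…,b_n) is not constant on 𝔽_q^×. -/
import Mathlib


/-- The generalized Kloosterman sum Kl_a^n(ψ; b₁, …, b_n)
= ∑_{x₁^{b₁} ⋯ x_n^{b_n} = a} ψ(x₁ + ⋯ + x_n). -/
noncomputable def Kl {F : Type*} [Field F] [Fintype F] [DecidableEq F]
    (ψ : AddChar F ℂ) (n : ℕ) (b : Fin n → ℕ) (a : F) : ℂ :=
  ∑ x ∈ Finset.univ.filter (fun x : Fin n → F => ∏ i, x i ^ b i = a), ψ (∑ i, x i)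

open Finset

private lemma addChar_map_sum {F : Type*} [Field F] (ψ : AddChar F ℂ) {n : ℕ}
    (x : Fin n → F) : ψ (∑ i, x i) = ∏ i, ψ (x i) := by
  classical
  induction (Finset.univ : Finset (Fin n)) using Finset.cons_induction with
  | empty => simpa using ψ.map_zero_eq_one
  | cons i s hi ih =>
    rw [Finset.sum_cons, Finset.prod_cons, AddChar.map_add_eq_mul, ih]

/-- Sum over the units of a field equals the sum over the nonzero elements. -/
private lemma sum_units_eq_filter {F : Type*} [Field F] [Fintype F] [DecidableEq F]
    (f : F → ℂ) :
    ∑ a : Fˣ, f (a : F) = ∑ a ∈ univ.filter (fun a : F => a ≠ 0), f a := by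
  rw [Fintype.sum_equiv unitsEquivNeZero (fun a : Fˣ => f (a : F))
    (fun a : {a : F // a ≠ 0} => f (a : F)) fun a => rfl]
  exact (Finset.sum_subtype _ (fun x => by simp) f).symm

/-- Sum over units when the function vanishes at 0. -/
private lemma sum_units_eq {F : Type*} [Field F] [Fintype F] [DecidableEq F]
    (f : F → ℂ) (hf : f 0 = 0) :
    ∑ a : Fˣ, f (a : F) = ∑ a : F, f a := by
  rw [sum_units_eq_filter]
  exact Finset.sum_filter_of_ne fun x _ hx h0 => hx (by rw [h0, hf])

private lemma key_sum {F : Type*} [Field F] [Fintype F] [DecidableEq F]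
    (ψ : AddChar F ℂ) (χ : MulChar F ℂ) (n : ℕ) (b : Fin n → ℕ) (hb : ∀ i, 0 < b i) :
    ∑ a : F, χ a * Kl ψ n b a = ∏ i, gaussSum (χ ^ b i) ψ := by
  have step1 : ∀ a : F, χ a * Kl ψ n b a
      = ∑ x ∈ univ.filter (fun x : Fin n → F => ∏ i, x i ^ b i = a),
          ∏ i, ((χ ^ b i) (x i) * ψ (x i)) := by
    intro a
    rw [Kl, Finset.mul_sum]
    refine Finset.sum_congr rfl fun x hx => ?_
    rw [Finset.mem_filter] at hx
    rw [← hx.2, map_prod, addChar_map_sum, ← Finset.prod_mul_distrib]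
    refine Finset.prod_congr rfl fun i _ => ?_
    rw [map_pow, MulChar.pow_apply' χ (hb i).ne' (x i)]
  calc ∑ a : F, χ a * Kl ψ n b a
      = ∑ a : F, ∑ x ∈ univ.filter (fun x : Fin n → F => ∏ i, x i ^ b i = a),
          ∏ i, ((χ ^ b i) (x i) * ψ (x i)) := by simp_rw [step1]
    _ = ∑ x : Fin n → F, ∏ i, ((χ ^ b i) (x i) * ψ (x i)) :=
        Finset.sum_fiberwise _ _ _
    _ = ∏ i, gaussSum (χ ^ b i) ψ := by
        simp only [gaussSum]
        rw [Finset.prod_univ_sum, Fintype.piFinset_univ]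

/-- For a nontrivial additive character ψ of 𝔽_q (q > 2) and positive integers
b₁, …, b_n, the function a ↦ Kl_a^n(ψ; b₁, …, b_n) is not constant on 𝔽_q^×. -/
theorem stmt5 {F : Type*} [Field F] [Fintype F] [DecidableEq F]
    (hq : 2 < Fintype.card F)
    (ψ : AddChar F ℂ) (hψ : ψ ≠ 1) (n : ℕ) (hn : 0 < n)
    (b : Fin n → ℕ) (hb : ∀ i, 0 < b i) :
    ¬ ∀ a₁ a₂ : Fˣ, Kl ψ n b (a₁ : F) = Kl ψ n b (a₂ : F) := by
  intro H
  -- pick a unit u ≠ 1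
  have hcard : 1 < Fintype.card Fˣ := by
    rw [Fintype.card_units]; omega
  obtain ⟨u, hu⟩ := Fintype.exists_ne_of_one_lt_card hcard 1
  have hu' : (u : F) ≠ 1 := fun h => hu (Units.ext h)
  -- pick a multiplicative character χ with χ u ≠ 1
  haveI : NeZero ((Monoid.exponent Fˣ : ℂ)) :=
    ⟨Nat.cast_ne_zero.mpr Monoid.exponent_ne_zero_of_finite⟩
  obtain ⟨χ, hχu⟩ := MulChar.exists_apply_ne_one_of_hasEnoughRootsOfUnity F ℂ hu'
  have hχ : χ ≠ 1 := fun h => hχu (by rw [h, MulChar.one_apply u.isUnit])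
  have hχ0 : χ 0 = 0 := χ.map_nonunit (by simp)
  -- the LHS of `key_sum` vanishes if Kl is constant on units
  have hL : ∑ a : F, χ a * Kl ψ n b a = 0 := by
    rw [← sum_units_eq (fun a => χ a * Kl ψ n b a) (by simp [hχ0])]
    calc ∑ a : Fˣ, χ (a : F) * Kl ψ n b (a : F)
        = ∑ a : Fˣ, χ (a : F) * Kl ψ n b ((1 : Fˣ) : F) := by
          refine Finset.sum_congr rfl fun a _ => ?_
          rw [H a 1]
      _ = (∑ a : Fˣ, χ (a : F)) * Kl ψ n b ((1 : Fˣ) : F) := by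
          rw [Finset.sum_mul]
      _ = 0 := by
          rw [sum_units_eq (fun a => χ a) hχ0, MulChar.sum_eq_zero_of_ne_one hχ, zero_mul]
  -- the RHS of `key_sum` does not vanish
  have hψ0 : ψ ≠ 0 := hψ
  have hψprim : ψ.IsPrimitive := AddChar.IsPrimitive.of_ne_one hψ
  have hg1 : gaussSum (1 : MulChar F ℂ) ψ = -1 := by
    have h1 : gaussSum (1 : MulChar F ℂ) ψ
        = ∑ a ∈ univ.filter (fun a : F => a ≠ 0), (1 : MulChar F ℂ) a * ψ a :=
      (Finset.sum_filter_of_ne fun x _ hx h0 => by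
        simp [h0, MulChar.map_nonunit (1 : MulChar F ℂ) (by simp : ¬ IsUnit (0:F))] at hx).symm
    rw [h1]
    have h2 : ∀ a ∈ univ.filter (fun a : F => a ≠ 0), (1 : MulChar F ℂ) a * ψ a = ψ a := by
      intro a ha
      rw [Finset.mem_filter] at ha
      rw [MulChar.one_apply (isUnit_iff_ne_zero.mpr ha.2), one_mul]
    rw [Finset.sum_congr rfl h2, Finset.filter_ne', Finset.sum_erase_eq_sub (mem_univ 0),
      AddChar.sum_eq_zero_iff_ne_zero.mpr hψ0, ψ.map_zero_eq_one]
    ring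
  have hg : ∀ i, gaussSum (χ ^ b i) ψ ≠ 0 := by
    intro i
    by_cases h : χ ^ b i = 1
    · rw [h, hg1]; norm_num
    · exact gaussSum_ne_zero_of_nontrivial
        (Nat.cast_ne_zero.mpr Fintype.card_ne_zero) h hψprim
  have := key_sum ψ χ n b hb
  rw [hL] at this
  exact (Finset.prod_ne_zero_iff.mpr fun i _ => hg i) this.symm
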